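/- For every positive integer i, with b(i,2,k) as defined from sums over compositions, one has b(i,2,i+2) = 1, ∑_{k=1}^{i+2} b(i,2,k)/k! = 1/2, and ∑_{k=1}^{i+2} (b(i,2,k)/k!)·2^k = (i+4)/2. -/

import Mathlib

open Finset Polynomial

/-- The set of `k`-tuples of positive integers summing to `n`. -/
def P (k n : ℕ) : Finset (Fin k → ℕ) :=
  (Finset.Nat.antidiagonalTuple k n).filter fun l => ∀ i, 0 < l i

/-- `∑_{(l₁,…,l_k)∈P(k,n)} 1/(l₁⋯l_k)`. -/
def S (k n : ℕ) : ℚ := ∑ l ∈ P k n, (∏ i, (l i : ℚ))⁻¹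

/-- `e_l(1,2,…,m)` : the l-th elementary symmetric polynomial evaluated at 1,…,m. -/
def esym (m l : ℕ) : ℚ := (((Finset.range m).val.map fun i => ((i : ℚ) + 1)).esymm l)

lemma mem_P {k n : ℕ} {l : Fin k → ℕ} : l ∈ P k n ↔ (∑ i, l i = n) ∧ ∀ i, 0 < l i := by
  simp [P, Finset.Nat.mem_antidiagonalTuple]

lemma S_zero_zero : S 0 0 = 1 := by
  have : P 0 0 = {![]} := by
    rw [P, Finset.Nat.antidiagonalTuple_zero_zero]
    simp
  simp [S, this]

lemma S_zero_succ (n : ℕ) : S 0 (n+1) = 0 := by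
  have : P 0 (n+1) = ∅ := by
    rw [Finset.eq_empty_iff_forall_notMem]
    intro l hl
    have := (mem_P.1 hl).1
    simp at this
  simp [S, this]

lemma S_eq_zero_of_lt {k n : ℕ} (h : n < k) : S k n = 0 := by
  have : P k n = ∅ := by
    rw [Finset.eq_empty_iff_forall_notMem]
    intro l hl
    rw [mem_P] at hl
    have : k ≤ n := by
      calc k = ∑ _i : Fin k, 1 := by simp
      _ ≤ ∑ i, l i := Finset.sum_le_sum fun i _ => hl.2 i
      _ = n := hl.1
    omega
  simp [S, this]

lemma S_self (n : ℕ) : S n n = 1 := by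
  have hP : P n n = {fun _ => 1} := by
    ext l
    rw [mem_P, Finset.mem_singleton]
    constructor
    · rintro ⟨hs, hp⟩
      funext i
      by_contra hne
      have hlt : (∑ _j : Fin n, 1) < ∑ j, l j := by
        refine Finset.sum_lt_sum (fun j _ => hp j) ⟨i, Finset.mem_univ i, ?_⟩
        have := hp i; omega
      simp [hs] at hlt
    · rintro rfl
      simp
  simp [S, hP]

lemma P_cons_sum {k n : ℕ} (F : (Fin (k+1) → ℕ) → ℚ) :
    ∑ l ∈ P (k+1) n, F l
      = ∑ j ∈ Finset.Icc 1 n, ∑ m ∈ P k (n - j), F (Fin.cons j m) := by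
  rw [← Finset.sum_sigma (Finset.Icc 1 n) (fun j => P k (n - j)) (fun x => F (Fin.cons x.1 x.2))]
  refine Finset.sum_nbij' (fun l => ⟨l 0, Fin.tail l⟩)
    (fun x => Fin.cons x.1 x.2) ?_ ?_ ?_ ?_ ?_
  · intro l hl
    rw [mem_P] at hl
    obtain ⟨hs, hp⟩ := hl
    rw [Fin.sum_univ_succ] at hs
    rw [Finset.mem_sigma]
    constructor
    · have h0 : 1 ≤ l 0 := hp 0
      have h0n : l 0 ≤ n := by omega
      exact Finset.mem_Icc.2 ⟨h0, h0n⟩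
    · refine mem_P.2 ⟨?_, fun i => hp i.succ⟩
      simp only [Fin.tail]
      omega
  · intro x hx
    rw [Finset.mem_sigma, Finset.mem_Icc, mem_P] at hx
    obtain ⟨⟨h1, h2⟩, hs, hp⟩ := hx
    refine mem_P.2 ⟨?_, ?_⟩
    · rw [Fin.sum_univ_succ]
      simp only [Fin.cons_zero, Fin.cons_succ]
      omega
    · intro i
      refine Fin.cases ?_ ?_ i
      · simp; omega
      · intro j; simpa using hp j
  · intro l _; exact Fin.cons_self_tail l
  · intro x _
    ext <;> simp [Fin.tail]
  · intro l _
    rw [Fin.cons_self_tail]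

lemma P_perm_sum {k n : ℕ} (σ : Equiv.Perm (Fin k)) (F : (Fin k → ℕ) → ℚ) :
    ∑ l ∈ P k n, F (l ∘ σ) = ∑ l ∈ P k n, F l := by
  refine Finset.sum_nbij' (fun l => l ∘ σ) (fun l => l ∘ σ.symm) ?_ ?_ ?_ ?_ ?_
  · intro l hl
    rw [mem_P] at hl ⊢
    exact ⟨by rw [← hl.1]; exact Equiv.sum_comp σ l, fun i => hl.2 _⟩
  · intro l hl
    rw [mem_P] at hl ⊢
    exact ⟨by rw [← hl.1]; exact Equiv.sum_comp σ.symm l, fun i => hl.2 _⟩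
  · intro l _; funext i; simp
  · intro l _; funext i; simp
  · intro l _; rfl

lemma Icc_reindex {n : ℕ} (f : ℕ → ℚ) :
    ∑ j ∈ Finset.Icc 1 n, f (n - j) = ∑ m ∈ Finset.range n, f m := by
  refine Finset.sum_nbij' (fun j => n - j) (fun m => n - m) ?_ ?_ ?_ ?_ ?_
  · intro j hj; rw [Finset.mem_Icc] at hj; rw [Finset.mem_range]; omega
  · intro m hm; rw [Finset.mem_range] at hm; rw [Finset.mem_Icc]; omega
  · intro j hj; rw [Finset.mem_Icc] at hj; omega
  · intro m hm; rw [Finset.mem_range] at hm; omega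
  · intro j _; rfl

lemma T_eq {k n : ℕ} :
    ∑ l ∈ P (k+1) n, (l 0 : ℚ) * (∏ i, (l i : ℚ))⁻¹ = ∑ m ∈ Finset.range n, S k m := by
  rw [P_cons_sum (fun l => (l 0 : ℚ) * (∏ i, (l i : ℚ))⁻¹)]
  rw [← Icc_reindex (fun m => S k m)]
  refine Finset.sum_congr rfl fun j hj => ?_
  rw [Finset.mem_Icc] at hj
  have hj0 : (j : ℚ) ≠ 0 := Nat.cast_ne_zero.2 (by omega)
  rw [S]
  refine Finset.sum_congr rfl fun m _ => ?_
  rw [Fin.prod_univ_succ]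
  simp only [Fin.cons_zero, Fin.cons_succ]
  rw [mul_inv, ← mul_assoc, mul_inv_cancel₀ hj0, one_mul]

lemma nS_eq {k n : ℕ} :
    (n : ℚ) * S (k+1) n = (k+1) * ∑ m ∈ Finset.range n, S k m := by
  rw [← T_eq, S, Finset.mul_sum]
  have step1 : ∀ l ∈ P (k+1) n,
      (n : ℚ) * (∏ i, (l i : ℚ))⁻¹ = ∑ m : Fin (k+1), (l m : ℚ) * (∏ i, (l i : ℚ))⁻¹ := by
    intro l hl
    rw [← Finset.sum_mul]
    congr 1
    rw [← Nat.cast_sum]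
    exact_mod_cast congrArg (Nat.cast (R := ℚ)) (mem_P.1 hl).1.symm
  rw [Finset.sum_congr rfl step1, Finset.sum_comm]
  have step2 : ∀ m : Fin (k+1),
      ∑ l ∈ P (k+1) n, (l m : ℚ) * (∏ i, (l i : ℚ))⁻¹
        = ∑ l ∈ P (k+1) n, (l 0 : ℚ) * (∏ i, (l i : ℚ))⁻¹ := by
    intro m
    have := P_perm_sum (n := n) (Equiv.swap 0 m) (fun l => (l 0 : ℚ) * (∏ i, (l i : ℚ))⁻¹)
    rw [← this]
    refine Finset.sum_congr rfl fun l _ => ?_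
    simp only [Function.comp]
    rw [Equiv.prod_comp (Equiv.swap 0 m) (fun i => (l i : ℚ)), Equiv.swap_apply_left]
  rw [Finset.sum_congr rfl (fun m _ => step2 m)]
  rw [Finset.sum_const, Finset.card_univ, Fintype.card_fin, nsmul_eq_mul]
  push_cast
  ring

/-- `∑_{k=0}^{n} t^k S(k,n)/k!`. -/
def Hq (t : ℚ) (n : ℕ) : ℚ := ∑ k ∈ Finset.range (n+1), t ^ k * S k n / k.factorial

lemma Hq_zero (t : ℚ) : Hq t 0 = 1 := by
  simp [Hq, S_zero_zero]

lemma Hq_trunc (t : ℚ) {n N : ℕ} (h : n ≤ N) :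
    ∑ k ∈ Finset.range (N+1), t ^ k * S k n / k.factorial = Hq t n := by
  rw [Hq]
  symm
  refine Finset.sum_subset (Finset.range_subset_range.2 (by omega)) ?_
  intro k hk hk'
  rw [Finset.mem_range] at hk hk'
  rw [S_eq_zero_of_lt (by omega)]
  simp

lemma Hq_rec (t : ℚ) (n : ℕ) :
    ((n : ℚ) + 1) * Hq t (n+1) = t * ∑ m ∈ Finset.range (n+1), Hq t m := by
  rw [Hq, Finset.mul_sum, Finset.sum_range_succ']
  have h0 : ((n : ℚ) + 1) * (t ^ 0 * S 0 (n+1) / (Nat.factorial 0)) = 0 := by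
    rw [S_zero_succ]; simp
  rw [h0, add_zero]
  have hterm : ∀ k, ((n : ℚ) + 1) * (t ^ (k+1) * S (k+1) (n+1) / (Nat.factorial (k+1)))
      = t * ∑ m ∈ Finset.range (n+1), t ^ k * S k m / (Nat.factorial k) := by
    intro k
    have hn : ((n : ℚ) + 1) * S (k+1) (n+1) = (k+1) * ∑ m ∈ Finset.range (n+1), S k m := by
      have := nS_eq (k := k) (n := n+1)
      push_cast at this
      exact this
    have hfac : ((k+1).factorial : ℚ) = (k+1) * (k.factorial : ℚ) := by
      rw [Nat.factorial_succ]; push_cast; ring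
    have hfk : (k.factorial : ℚ) ≠ 0 := Nat.cast_ne_zero.2 (Nat.factorial_ne_zero k)
    have hk1 : ((k : ℚ) + 1) ≠ 0 := by positivity
    have key : ∀ X : ℚ, t ^ (k+1) * (((k : ℚ) + 1) * X) / (((k : ℚ) + 1) * (k.factorial : ℚ))
        = t * (t ^ k * X / (k.factorial : ℚ)) := by
      intro X; field_simp; ring
    rw [show ((n : ℚ) + 1) * (t ^ (k+1) * S (k+1) (n+1) / (Nat.factorial (k+1)))
        = t ^ (k+1) * (((n : ℚ) + 1) * S (k+1) (n+1)) / (Nat.factorial (k+1)) by ring]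
    rw [hn, hfac, key, Finset.mul_sum, Finset.sum_div]
  rw [Finset.sum_congr rfl (fun k _ => hterm k), ← Finset.mul_sum, Finset.sum_comm]
  congr 1
  refine Finset.sum_congr rfl fun m hm => ?_
  rw [Finset.mem_range] at hm
  exact Hq_trunc t (by omega)

lemma Hq_one : ∀ n, Hq 1 n = 1 := by
  intro n
  induction n using Nat.strong_induction_on with
  | _ n ih =>
    match n with
    | 0 => exact Hq_zero 1
    | Nat.succ m =>
      have h := Hq_rec 1 m
      have hs : ∑ j ∈ Finset.range (m+1), Hq 1 j = (m : ℚ) + 1 := by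
        rw [Finset.sum_congr rfl (fun j hj => ih j (by rw [Finset.mem_range] at hj; omega))]
        simp
      rw [hs, one_mul] at h
      have hm1 : ((m : ℚ) + 1) ≠ 0 := by positivity
      field_simp at h
      -- done
      linarith [h]

lemma gauss_sum (N : ℕ) : ∑ j ∈ Finset.range N, ((j : ℚ) + 1) = N * (N + 1) / 2 := by
  induction N with
  | zero => simp
  | succ m ih =>
    rw [Finset.sum_range_succ, ih]
    push_cast
    ring

lemma Hq_two : ∀ n, Hq 2 n = (n : ℚ) + 1 := by
  intro n
  induction n using Nat.strong_induction_on with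
  | _ n ih =>
    match n with
    | 0 => rw [Hq_zero 2]; simp
    | Nat.succ m =>
      have h := Hq_rec 2 m
      have hs : ∑ j ∈ Finset.range (m+1), Hq 2 j = ((m : ℚ)+1) * ((m : ℚ)+2) / 2 := by
        rw [Finset.sum_congr rfl (fun j hj => ih j (by rw [Finset.mem_range] at hj; omega))]
        rw [gauss_sum (m+1)]
        push_cast
        ring
      rw [hs] at h
      have hm1 : ((m : ℚ) + 1) ≠ 0 := by positivity
      have : ((m : ℚ) + 1) * Hq 2 (m+1) = ((m : ℚ)+1) * ((m : ℚ)+2) := by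
        rw [h]; ring
      have := mul_left_cancel₀ hm1 this
      push_cast
      linarith [this]

lemma sum_Icc_Hq (t : ℚ) {n N : ℕ} (h1 : 1 ≤ n) (h2 : n ≤ N) :
    ∑ k ∈ Finset.Icc 1 N, t ^ k * S k n / k.factorial = Hq t n := by
  rw [← Hq_trunc t h2]
  have hr : Finset.range (N+1) = insert 0 (Finset.Icc 1 N) := by
    ext k
    simp only [Finset.mem_range, Finset.mem_insert, Finset.mem_Icc]
    omega
  rw [hr, Finset.sum_insert (by simp)]
  obtain ⟨n', rfl⟩ : ∃ n', n = n' + 1 := ⟨n - 1, by omega⟩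
  rw [S_zero_succ]
  simp

theorem stmt7 (i : ℕ) (hi : 0 < i) :
    S (i + 2) (i + 2) - S (i + 2) (i + 1) / 2 = 1 ∧
    ∑ k ∈ Finset.Icc 1 (i + 2), (S k (i + 2) - S k (i + 1) / 2) / k.factorial = 1 / 2 ∧
    ∑ k ∈ Finset.Icc 1 (i + 2), (S k (i + 2) - S k (i + 1) / 2) / k.factorial * 2 ^ k
      = ((i : ℚ) + 4) / 2 := by
  refine ⟨?_, ?_, ?_⟩
  · rw [S_self, S_eq_zero_of_lt (by omega)]
    norm_num
  · have hsplit : ∀ k ∈ Finset.Icc 1 (i+2),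
        (S k (i + 2) - S k (i + 1) / 2) / (k.factorial : ℚ)
          = (1 : ℚ) ^ k * S k (i+2) / k.factorial
            - ((1 : ℚ) ^ k * S k (i+1) / k.factorial) / 2 := by
      intro k _
      rw [one_pow]
      ring
    rw [Finset.sum_congr rfl hsplit, Finset.sum_sub_distrib]
    rw [sum_Icc_Hq 1 (by omega) (by omega), ← Finset.sum_div,
      sum_Icc_Hq 1 (by omega) (by omega), Hq_one, Hq_one]
    norm_num
  · have hsplit : ∀ k ∈ Finset.Icc 1 (i+2),
        (S k (i + 2) - S k (i + 1) / 2) / (k.factorial : ℚ) * 2 ^ k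
          = (2 : ℚ) ^ k * S k (i+2) / k.factorial
            - ((2 : ℚ) ^ k * S k (i+1) / k.factorial) / 2 := by
      intro k _
      ring
    rw [Finset.sum_congr rfl hsplit, Finset.sum_sub_distrib]
    rw [sum_Icc_Hq 2 (by omega) (by omega), ← Finset.sum_div,
      sum_Icc_Hq 2 (by omega) (by omega), Hq_two, Hq_two]
    push_cast
    ring
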